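/- The sum of squared residuals from the stratified-experiment regression satisfies Σ_i ε̂_i² = Σ_k { n_[k]1 s_[k]1² + n_[k]1(1-e_[k])²(τ̂_[k]-τ̂_OLS)² + n_[k]0 s_[k]0² + n_[k]0 e_[k]²(τ̂_[k]-τ̂_OLS)² }, where s_[k]z² = (1/n_[k]z)Σ_{i∈[k],Z_i=z}(Y_i - Ȳ_[k]z)² for z ∈ {0,1}. -/

import Mathlib

open Matrix Finset

noncomputable section

variable {n K : ℕ}

/-- Units in stratum `k`. -/
def stratSet (stratum : Fin n → Fin K) (k : Fin K) : Finset (Fin n) :=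
  Finset.univ.filter (fun i => stratum i = k)

/-- Treated units in stratum `k`. -/
def treatSet (stratum : Fin n → Fin K) (Z : Fin n → Bool) (k : Fin K) : Finset (Fin n) :=
  (stratSet stratum k).filter (fun i => Z i)

/-- Control units in stratum `k`. -/
def ctrlSet (stratum : Fin n → Fin K) (Z : Fin n → Bool) (k : Fin K) : Finset (Fin n) :=
  (stratSet stratum k).filter (fun i => ¬ Z i)

/-- Stratum size `n_[k]`. -/
def nS (stratum : Fin n → Fin K) (k : Fin K) : ℕ := (stratSet stratum k).card

/-- Number of treated units `n_[k]1`. -/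
def n1 (stratum : Fin n → Fin K) (Z : Fin n → Bool) (k : Fin K) : ℕ :=
  (treatSet stratum Z k).card

/-- Number of control units `n_[k]0`. -/
def n0 (stratum : Fin n → Fin K) (Z : Fin n → Bool) (k : Fin K) : ℕ :=
  (ctrlSet stratum Z k).card

/-- Stratum proportion `π_[k] = n_[k]/n`. -/
def piS (stratum : Fin n → Fin K) (k : Fin K) : ℝ := (nS stratum k : ℝ) / n

/-- Propensity score `e_[k] = n_[k]1/n_[k]`. -/
def eS (stratum : Fin n → Fin K) (Z : Fin n → Bool) (k : Fin K) : ℝ :=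
  (n1 stratum Z k : ℝ) / (nS stratum k : ℝ)

/-- Treated mean `Ȳ_[k]1`. -/
def ybar1 (stratum : Fin n → Fin K) (Z : Fin n → Bool) (Y : Fin n → ℝ) (k : Fin K) : ℝ :=
  (∑ i ∈ treatSet stratum Z k, Y i) / (n1 stratum Z k : ℝ)

/-- Control mean `Ȳ_[k]0`. -/
def ybar0 (stratum : Fin n → Fin K) (Z : Fin n → Bool) (Y : Fin n → ℝ) (k : Fin K) : ℝ :=
  (∑ i ∈ ctrlSet stratum Z k, Y i) / (n0 stratum Z k : ℝ)

/-- Within-stratum difference in means `τ̂_[k]`. -/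
def tauK (stratum : Fin n → Fin K) (Z : Fin n → Bool) (Y : Fin n → ℝ) (k : Fin K) : ℝ :=
  ybar1 stratum Z Y k - ybar0 stratum Z Y k

/-- Weight `ω_[k] = π_[k]e_[k](1-e_[k]) / Σ_{k'} π_[k']e_[k'](1-e_[k'])`. -/
def wS (stratum : Fin n → Fin K) (Z : Fin n → Bool) (k : Fin K) : ℝ :=
  piS stratum k * eS stratum Z k * (1 - eS stratum Z k) /
    (∑ k', piS stratum k' * eS stratum Z k' * (1 - eS stratum Z k'))

/-- Weighted average `τ̂_OLS = Σ_k ω_[k] τ̂_[k]`. -/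
def tauOLS (stratum : Fin n → Fin K) (Z : Fin n → Bool) (Y : Fin n → ℝ) : ℝ :=
  ∑ k, wS stratum Z k * tauK stratum Z Y k

/-- Design matrix of the no-intercept regression of `Y` on `Z` and the stratum dummies. -/
def design (stratum : Fin n → Fin K) (Z : Fin n → Bool) :
    Matrix (Fin n) (Unit ⊕ Fin K) ℝ := fun i j =>
  match j with
  | Sum.inl _ => if Z i then 1 else 0
  | Sum.inr k => if stratum i = k then 1 else 0

/-- OLS coefficient vector from the regression of `Y` on `Z` and the stratum dummies. -/
def olsCoef (stratum : Fin n → Fin K) (Z : Fin n → Bool) (Y : Fin n → ℝ) :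
    (Unit ⊕ Fin K) → ℝ :=
  ((design stratum Z)ᵀ * design stratum Z)⁻¹ *ᵥ ((design stratum Z)ᵀ *ᵥ Y)

/-- OLS residual vector from the regression of `Y` on `Z` and the stratum dummies. -/
def olsResid (stratum : Fin n → Fin K) (Z : Fin n → Bool) (Y : Fin n → ℝ) (i : Fin n) : ℝ :=
  Y i - (design stratum Z *ᵥ olsCoef stratum Z Y) i

/-- Treated-group sample variance `s_[k]1²` (denominator `n_[k]1`). -/
def s1sq (stratum : Fin n → Fin K) (Z : Fin n → Bool) (Y : Fin n → ℝ) (k : Fin K) : ℝ :=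
  (∑ i ∈ treatSet stratum Z k, (Y i - ybar1 stratum Z Y k) ^ 2) / (n1 stratum Z k : ℝ)

/-- Control-group sample variance `s_[k]0²` (denominator `n_[k]0`). -/
def s0sq (stratum : Fin n → Fin K) (Z : Fin n → Bool) (Y : Fin n → ℝ) (k : Fin K) : ℝ :=
  (∑ i ∈ ctrlSet stratum Z k, (Y i - ybar0 stratum Z Y k) ^ 2) / (n0 stratum Z k : ℝ)

/-- Residual of `Z` from its regression on the stratum dummies: `Z̃_i = Z_i - e_[stratum i]`. -/
def zTilde (stratum : Fin n → Fin K) (Z : Fin n → Bool) (i : Fin n) : ℝ :=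
  (if Z i then 1 else 0) - eS stratum Z (stratum i)

end

section AuxStmt15

open Matrix Finset

variable {n K : ℕ}

/-- Candidate OLS coefficient vector. -/
noncomputable def betaAux (stratum : Fin n → Fin K) (Z : Fin n → Bool) (Y : Fin n → ℝ) :
    (Unit ⊕ Fin K) → ℝ := fun j =>
  match j with
  | Sum.inl _ => tauOLS stratum Z Y
  | Sum.inr k => ybar0 stratum Z Y k
      + eS stratum Z k * (tauK stratum Z Y k - tauOLS stratum Z Y)

lemma mem_treatSet {stratum : Fin n → Fin K} {Z : Fin n → Bool} {k : Fin K} {i : Fin n} :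
    i ∈ treatSet stratum Z k ↔ stratum i = k ∧ Z i = true := by
  simp [treatSet, stratSet]

lemma mem_ctrlSet {stratum : Fin n → Fin K} {Z : Fin n → Bool} {k : Fin K} {i : Fin n} :
    i ∈ ctrlSet stratum Z k ↔ stratum i = k ∧ Z i = false := by
  simp [ctrlSet, stratSet]

lemma nS_eq (stratum : Fin n → Fin K) (Z : Fin n → Bool) (k : Fin K) :
    nS stratum k = n1 stratum Z k + n0 stratum Z k := by
  simp only [nS, n1, n0, treatSet, ctrlSet]
  exact (Finset.card_filter_add_card_filter_not (fun i => Z i = true)).symm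

lemma sum_strat_split (stratum : Fin n → Fin K) (Z : Fin n → Bool) (k : Fin K) (f : Fin n → ℝ) :
    ∑ i ∈ stratSet stratum k, f i
      = ∑ i ∈ treatSet stratum Z k, f i + ∑ i ∈ ctrlSet stratum Z k, f i := by
  simp only [treatSet, ctrlSet]
  exact (Finset.sum_filter_add_sum_filter_not _ _ _).symm

lemma sum_over_strata (stratum : Fin n → Fin K) (f : Fin n → ℝ) :
    ∑ i, f i = ∑ k, ∑ i ∈ stratSet stratum k, f i := by
  simp only [stratSet]
  exact (Finset.sum_fiberwise Finset.univ stratum f).symm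

section Main

variable (stratum : Fin n → Fin K) (Z : Fin n → Bool) (Y : Fin n → ℝ)
variable (h1 : ∀ k, 0 < n1 stratum Z k) (h0 : ∀ k, 0 < n0 stratum Z k)

include h1 h0

lemma nS_pos (k : Fin K) : 0 < nS stratum k := by
  rw [nS_eq stratum Z]; exact Nat.add_pos_left (h1 k) _

lemma mul_eS (k : Fin K) : (nS stratum k : ℝ) * eS stratum Z k = (n1 stratum Z k : ℝ) := by
  have h : (nS stratum k : ℝ) ≠ 0 := by
    exact_mod_cast (nS_pos stratum Z h1 h0 k).ne'
  rw [eS, mul_div_cancel₀ _ h]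

lemma one_sub_eS (k : Fin K) :
    1 - eS stratum Z k = (n0 stratum Z k : ℝ) / (nS stratum k : ℝ) := by
  have h : (nS stratum k : ℝ) ≠ 0 := by
    exact_mod_cast (nS_pos stratum Z h1 h0 k).ne'
  rw [eS, eq_div_iff h, sub_mul, div_mul_cancel₀ _ h, one_mul]
  rw [nS_eq stratum Z]
  push_cast
  ring

lemma eS_pos (k : Fin K) : 0 < eS stratum Z k := by
  apply div_pos
  · exact_mod_cast h1 k
  · exact_mod_cast nS_pos stratum Z h1 h0 k

lemma one_sub_eS_pos (k : Fin K) : 0 < 1 - eS stratum Z k := by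
  rw [one_sub_eS stratum Z h1 h0 k]
  apply div_pos
  · exact_mod_cast h0 k
  · exact_mod_cast nS_pos stratum Z h1 h0 k

lemma sum_treat_Y (k : Fin K) :
    ∑ i ∈ treatSet stratum Z k, Y i = (n1 stratum Z k : ℝ) * ybar1 stratum Z Y k := by
  have h : (n1 stratum Z k : ℝ) ≠ 0 := by exact_mod_cast (h1 k).ne'
  rw [ybar1, mul_div_cancel₀ _ h]

lemma sum_ctrl_Y (k : Fin K) :
    ∑ i ∈ ctrlSet stratum Z k, Y i = (n0 stratum Z k : ℝ) * ybar0 stratum Z Y k := by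
  have h : (n0 stratum Z k : ℝ) ≠ 0 := by exact_mod_cast (h0 k).ne'
  rw [ybar0, mul_div_cancel₀ _ h]

/-- the weight numerator in convenient form -/
lemma piS_mul (hn : 0 < n) (k : Fin K) :
    piS stratum k * eS stratum Z k * (1 - eS stratum Z k)
      = (n1 stratum Z k : ℝ) * (1 - eS stratum Z k) / n := by
  have hn' : (n : ℝ) ≠ 0 := by exact_mod_cast hn.ne'
  have hS : (nS stratum k : ℝ) ≠ 0 := by
    exact_mod_cast (nS_pos stratum Z h1 h0 k).ne'
  rw [piS, eS]
  field_simp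

lemma key_orth (hn : 0 < n) :
    ∑ k, (n1 stratum Z k : ℝ) * (1 - eS stratum Z k)
        * (tauK stratum Z Y k - tauOLS stratum Z Y) = 0 := by
  have hn' : (n : ℝ) ≠ 0 := by exact_mod_cast hn.ne'
  have hS : 0 < ∑ k, (n1 stratum Z k : ℝ) * (1 - eS stratum Z k) :=
    Finset.sum_pos
      (fun k _ => mul_pos (by exact_mod_cast h1 k) (one_sub_eS_pos stratum Z h1 h0 k))
      (Finset.univ_nonempty_iff.mpr ⟨stratum ⟨0, hn⟩⟩)
  have hw : ∀ k, wS stratum Z k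
      = (n1 stratum Z k : ℝ) * (1 - eS stratum Z k)
        / (∑ k', (n1 stratum Z k' : ℝ) * (1 - eS stratum Z k')) := by
    intro k
    rw [wS]
    simp_rw [piS_mul stratum Z h1 h0 hn]
    rw [← Finset.sum_div, div_div_div_cancel_right₀ hn']
  have htau : tauOLS stratum Z Y * (∑ k', (n1 stratum Z k' : ℝ) * (1 - eS stratum Z k'))
      = ∑ k, (n1 stratum Z k : ℝ) * (1 - eS stratum Z k) * tauK stratum Z Y k := by
    rw [tauOLS, Finset.sum_mul]
    refine Finset.sum_congr rfl fun k _ => ?_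
    rw [hw k]
    field_simp
  have expand : ∑ k, (n1 stratum Z k : ℝ) * (1 - eS stratum Z k)
        * (tauK stratum Z Y k - tauOLS stratum Z Y)
      = (∑ k, (n1 stratum Z k : ℝ) * (1 - eS stratum Z k) * tauK stratum Z Y k)
        - tauOLS stratum Z Y * (∑ k', (n1 stratum Z k' : ℝ) * (1 - eS stratum Z k')) := by
    rw [Finset.mul_sum, ← Finset.sum_sub_distrib]
    exact Finset.sum_congr rfl fun k _ => by ring
  rw [expand, htau, sub_self]

omit h1 h0 in
lemma mulVec_design_apply (v : (Unit ⊕ Fin K) → ℝ) (i : Fin n) :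
    (design stratum Z *ᵥ v) i
      = (if Z i then v (Sum.inl ()) else 0) + v (Sum.inr (stratum i)) := by
  rw [Matrix.mulVec, dotProduct, Fintype.sum_sum_type]
  simp only [design, Fintype.sum_unique, ite_mul, one_mul, zero_mul]
  congr 1
  rw [Finset.sum_ite_eq]
  simp

lemma fitted_treat (k : Fin K) (i : Fin n) (hik : stratum i = k) (hz : Z i = true) :
    (design stratum Z *ᵥ betaAux stratum Z Y) i
      = ybar1 stratum Z Y k - (1 - eS stratum Z k)
          * (tauK stratum Z Y k - tauOLS stratum Z Y) := by
  rw [mulVec_design_apply, hz, if_pos rfl, hik]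
  show tauOLS stratum Z Y + (ybar0 stratum Z Y k
      + eS stratum Z k * (tauK stratum Z Y k - tauOLS stratum Z Y)) = _
  have : ybar1 stratum Z Y k = ybar0 stratum Z Y k + tauK stratum Z Y k := by
    rw [tauK]; ring
  rw [this]; ring

lemma fitted_ctrl (k : Fin K) (i : Fin n) (hik : stratum i = k) (hz : Z i = false) :
    (design stratum Z *ᵥ betaAux stratum Z Y) i
      = ybar0 stratum Z Y k + eS stratum Z k
          * (tauK stratum Z Y k - tauOLS stratum Z Y) := by
  rw [mulVec_design_apply, hz, hik]
  simp [betaAux]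

lemma sum_resid_treat (k : Fin K) :
    ∑ i ∈ treatSet stratum Z k, (Y i - (design stratum Z *ᵥ betaAux stratum Z Y) i)
      = (n1 stratum Z k : ℝ) * (1 - eS stratum Z k)
          * (tauK stratum Z Y k - tauOLS stratum Z Y) := by
  have : ∀ i ∈ treatSet stratum Z k,
      Y i - (design stratum Z *ᵥ betaAux stratum Z Y) i
        = (Y i - ybar1 stratum Z Y k)
          + (1 - eS stratum Z k) * (tauK stratum Z Y k - tauOLS stratum Z Y) := by
    intro i hi
    rw [mem_treatSet] at hi
    rw [fitted_treat stratum Z Y h1 h0 k i hi.1 hi.2]; ring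
  rw [Finset.sum_congr rfl this]
  simp only [Finset.sum_add_distrib, Finset.sum_sub_distrib, Finset.sum_const, nsmul_eq_mul]
  rw [sum_treat_Y stratum Z Y h1 h0 k,
    show ((treatSet stratum Z k).card : ℝ) = (n1 stratum Z k : ℝ) from rfl]
  ring

lemma sum_resid_ctrl (k : Fin K) :
    ∑ i ∈ ctrlSet stratum Z k, (Y i - (design stratum Z *ᵥ betaAux stratum Z Y) i)
      = -((n0 stratum Z k : ℝ) * eS stratum Z k
          * (tauK stratum Z Y k - tauOLS stratum Z Y)) := by
  have : ∀ i ∈ ctrlSet stratum Z k,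
      Y i - (design stratum Z *ᵥ betaAux stratum Z Y) i
        = (Y i - ybar0 stratum Z Y k)
          - eS stratum Z k * (tauK stratum Z Y k - tauOLS stratum Z Y) := by
    intro i hi
    rw [mem_ctrlSet] at hi
    rw [fitted_ctrl stratum Z Y h1 h0 k i hi.1 hi.2]; ring
  rw [Finset.sum_congr rfl this]
  simp only [Finset.sum_sub_distrib, Finset.sum_const, nsmul_eq_mul]
  rw [sum_ctrl_Y stratum Z Y h1 h0 k,
    show ((ctrlSet stratum Z k).card : ℝ) = (n0 stratum Z k : ℝ) from rfl]
  ring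

lemma n1_bal (k : Fin K) :
    (n1 stratum Z k : ℝ) * (1 - eS stratum Z k)
      = (n0 stratum Z k : ℝ) * eS stratum Z k := by
  have h := mul_eS stratum Z h1 h0 k
  rw [nS_eq stratum Z] at h
  push_cast at h
  nlinarith [h]

lemma sum_resid_strat (k : Fin K) :
    ∑ i ∈ stratSet stratum k, (Y i - (design stratum Z *ᵥ betaAux stratum Z Y) i) = 0 := by
  rw [sum_strat_split stratum Z, sum_resid_treat stratum Z Y h1 h0 k,
    sum_resid_ctrl stratum Z Y h1 h0 k, n1_bal stratum Z h1 h0 k]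
  ring

lemma normal_eq (hn : 0 < n) :
    ((design stratum Z)ᵀ * design stratum Z) *ᵥ betaAux stratum Z Y
      = (design stratum Z)ᵀ *ᵥ Y := by
  have key : ∀ j, ∑ i, design stratum Z i j
      * (Y i - (design stratum Z *ᵥ betaAux stratum Z Y) i) = 0 := by
    intro j
    match j with
    | Sum.inl _ =>
      have : ∀ i, design stratum Z i (Sum.inl ())
          * (Y i - (design stratum Z *ᵥ betaAux stratum Z Y) i)
          = if Z i = true then (Y i - (design stratum Z *ᵥ betaAux stratum Z Y) i) else 0 := by
        intro i
        by_cases h : Z i <;> simp [design, h]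
      rw [Finset.sum_congr rfl (fun i _ => this i), ← Finset.sum_filter]
      have hsplit : Finset.univ.filter (fun i => Z i = true)
          = Finset.univ.filter (fun i => Z i) := by simp
      rw [hsplit]
      have : ∑ i ∈ Finset.univ.filter (fun i => Z i),
          (Y i - (design stratum Z *ᵥ betaAux stratum Z Y) i)
          = ∑ k, ∑ i ∈ treatSet stratum Z k,
            (Y i - (design stratum Z *ᵥ betaAux stratum Z Y) i) := by
        rw [← Finset.sum_fiberwise (Finset.univ.filter (fun i => Z i)) stratum]
        congr 1; ext k
        congr 1
        simp only [treatSet, stratSet, Finset.filter_filter]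
        congr 1; ext i
        tauto
      rw [this]
      simp_rw [sum_resid_treat stratum Z Y h1 h0 _]
      exact key_orth stratum Z Y h1 h0 hn
    | Sum.inr k =>
      have : ∀ i, design stratum Z i (Sum.inr k)
          * (Y i - (design stratum Z *ᵥ betaAux stratum Z Y) i)
          = if stratum i = k then (Y i - (design stratum Z *ᵥ betaAux stratum Z Y) i) else 0 := by
        intro i
        by_cases h : stratum i = k <;> simp [design, h]
      rw [Finset.sum_congr rfl (fun i _ => this i), ← Finset.sum_filter]
      exact sum_resid_strat stratum Z Y h1 h0 k
  ext j
  rw [← Matrix.mulVec_mulVec]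
  have lhs : ((design stratum Z)ᵀ *ᵥ (design stratum Z *ᵥ betaAux stratum Z Y)) j
      = ∑ i, design stratum Z i j * (design stratum Z *ᵥ betaAux stratum Z Y) i := by
    rw [Matrix.mulVec, dotProduct]
    congr 1
  have rhs : ((design stratum Z)ᵀ *ᵥ Y) j = ∑ i, design stratum Z i j * Y i := by
    rw [Matrix.mulVec, dotProduct]
    congr 1
  rw [lhs, rhs, ← sub_eq_zero, ← Finset.sum_sub_distrib]
  have hneg : ∑ i, (design stratum Z i j * (design stratum Z *ᵥ betaAux stratum Z Y) i
      - design stratum Z i j * Y i)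
      = -∑ i, design stratum Z i j * (Y i - (design stratum Z *ᵥ betaAux stratum Z Y) i) := by
    rw [← Finset.sum_neg_distrib]
    exact Finset.sum_congr rfl fun i _ => by ring
  rw [hneg, key j, neg_zero]

lemma design_isUnit (hK : 0 < K) : IsUnit ((design stratum Z)ᵀ * design stratum Z) := by
  rw [← Matrix.mulVec_injective_iff_isUnit]
  intro v w hvw
  have hu : ((design stratum Z)ᵀ * design stratum Z) *ᵥ (v - w) = 0 := by
    rw [Matrix.mulVec_sub, hvw, sub_self]
  set u := v - w with hu'
  have hXu : design stratum Z *ᵥ u = 0 := by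
    have hdot : (design stratum Z *ᵥ u) ⬝ᵥ (design stratum Z *ᵥ u) = 0 := by
      have : (design stratum Z *ᵥ u) ⬝ᵥ (design stratum Z *ᵥ u)
          = u ⬝ᵥ (((design stratum Z)ᵀ * design stratum Z) *ᵥ u) := by
        rw [← Matrix.mulVec_mulVec, Matrix.dotProduct_mulVec u,
          ← Matrix.vecMul_transpose]
      rw [this, hu, dotProduct_zero]
    have hnn : ∀ i ∈ Finset.univ, 0 ≤ (design stratum Z *ᵥ u) i * (design stratum Z *ᵥ u) i :=
      fun i _ => mul_self_nonneg _
    rw [dotProduct] at hdot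
    have := (Finset.sum_eq_zero_iff_of_nonneg hnn).mp hdot
    funext i
    have hi := this i (Finset.mem_univ i)
    exact mul_self_eq_zero.mp hi
  have hkz : ∀ k, u (Sum.inr k) = 0 := by
    intro k
    obtain ⟨i, hi⟩ := Finset.card_pos.mp (h0 k)
    rw [mem_ctrlSet] at hi
    have := congrFun hXu i
    rw [mulVec_design_apply, hi.2, hi.1] at this
    simpa using this
  have huz : ∀ j, u j = 0 := by
    intro j
    match j with
    | Sum.inr k => exact hkz k
    | Sum.inl _ =>
      obtain ⟨k⟩ : Nonempty (Fin K) := ⟨⟨0, hK⟩⟩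
      obtain ⟨i, hi⟩ := Finset.card_pos.mp (h1 k)
      rw [mem_treatSet] at hi
      have := congrFun hXu i
      rw [mulVec_design_apply, hi.2, hi.1, hkz k] at this
      simpa using this
  have : u = 0 := funext huz
  rw [hu'] at this
  exact sub_eq_zero.mp this

lemma olsCoef_eq (hn : 0 < n) (hK : 0 < K) :
    olsCoef stratum Z Y = betaAux stratum Z Y := by
  have hdet : IsUnit ((design stratum Z)ᵀ * design stratum Z).det :=
    (Matrix.isUnit_iff_isUnit_det _).mp (design_isUnit stratum Z h1 h0 hK)
  rw [olsCoef, ← normal_eq stratum Z Y h1 h0 hn, Matrix.mulVec_mulVec,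
    Matrix.nonsing_inv_mul _ hdet, Matrix.one_mulVec]

omit h1 h0 in
lemma sum_sq_shift {ι : Type*} (s : Finset ι) (f : ι → ℝ) (c : ℝ)
    (hf : ∑ i ∈ s, f i = 0) :
    ∑ i ∈ s, (f i + c) ^ 2 = (∑ i ∈ s, f i ^ 2) + s.card * c ^ 2 := by
  have : ∀ i ∈ s, (f i + c) ^ 2 = f i ^ 2 + 2 * c * f i + c ^ 2 := by
    intro i _; ring
  rw [Finset.sum_congr rfl this, Finset.sum_add_distrib, Finset.sum_add_distrib,
    ← Finset.mul_sum, hf, Finset.sum_const, nsmul_eq_mul]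
  ring

end Main

end AuxStmt15

theorem stmt_15 {n K : ℕ} (stratum : Fin n → Fin K) (Z : Fin n → Bool) (Y : Fin n → ℝ)
    (h1 : ∀ k, 0 < n1 stratum Z k) (h0 : ∀ k, 0 < n0 stratum Z k) :
    (∑ i, olsResid stratum Z Y i ^ 2)
      = ∑ k,
          ((n1 stratum Z k : ℝ) * s1sq stratum Z Y k
            + (n1 stratum Z k : ℝ) * (1 - eS stratum Z k) ^ 2
                * (tauK stratum Z Y k - tauOLS stratum Z Y) ^ 2
            + (n0 stratum Z k : ℝ) * s0sq stratum Z Y k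
            + (n0 stratum Z k : ℝ) * eS stratum Z k ^ 2
                * (tauK stratum Z Y k - tauOLS stratum Z Y) ^ 2) := by
  rcases Nat.eq_zero_or_pos K with hK | hK
  · subst hK
    have hne : IsEmpty (Fin n) := ⟨fun i => (stratum i).elim0⟩
    rw [Finset.univ_eq_empty, Finset.univ_eq_empty, Finset.sum_empty, Finset.sum_empty]
  · rcases Nat.eq_zero_or_pos n with hn | hn
    · exfalso
      have h := h1 ⟨0, hK⟩
      have : n1 stratum Z ⟨0, hK⟩ ≤ 0 := by
        subst hn
        calc n1 stratum Z ⟨0, hK⟩ ≤ Fintype.card (Fin 0) := Finset.card_le_univ _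
          _ = 0 := by simp
      omega
    have hcoef := olsCoef_eq stratum Z Y h1 h0 hn hK
    have hres : ∀ i, olsResid stratum Z Y i
        = Y i - (design stratum Z *ᵥ betaAux stratum Z Y) i := by
      intro i; rw [olsResid, hcoef]
    rw [sum_over_strata stratum (fun i => olsResid stratum Z Y i ^ 2)]
    apply Finset.sum_congr rfl
    intro k _
    rw [sum_strat_split stratum Z]
    -- treated part
    have hf1 : ∑ i ∈ treatSet stratum Z k, (Y i - ybar1 stratum Z Y k) = 0 := by
      rw [Finset.sum_sub_distrib, sum_treat_Y stratum Z Y h1 h0 k, Finset.sum_const,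
        nsmul_eq_mul]
      rw [show ((treatSet stratum Z k).card : ℝ) = (n1 stratum Z k : ℝ) from rfl]
      ring
    have hf0 : ∑ i ∈ ctrlSet stratum Z k, (Y i - ybar0 stratum Z Y k) = 0 := by
      rw [Finset.sum_sub_distrib, sum_ctrl_Y stratum Z Y h1 h0 k, Finset.sum_const,
        nsmul_eq_mul]
      rw [show ((ctrlSet stratum Z k).card : ℝ) = (n0 stratum Z k : ℝ) from rfl]
      ring
    have htr : ∀ i ∈ treatSet stratum Z k, olsResid stratum Z Y i ^ 2
        = ((Y i - ybar1 stratum Z Y k)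
            + (1 - eS stratum Z k) * (tauK stratum Z Y k - tauOLS stratum Z Y)) ^ 2 := by
      intro i hi
      rw [mem_treatSet] at hi
      rw [hres, fitted_treat stratum Z Y h1 h0 k i hi.1 hi.2]
      ring
    have hct : ∀ i ∈ ctrlSet stratum Z k, olsResid stratum Z Y i ^ 2
        = ((Y i - ybar0 stratum Z Y k)
            + (-(eS stratum Z k * (tauK stratum Z Y k - tauOLS stratum Z Y)))) ^ 2 := by
      intro i hi
      rw [mem_ctrlSet] at hi
      rw [hres, fitted_ctrl stratum Z Y h1 h0 k i hi.1 hi.2]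
      ring
    rw [Finset.sum_congr rfl htr, Finset.sum_congr rfl hct,
      sum_sq_shift _ _ _ hf1, sum_sq_shift _ _ _ hf0]
    have hs1 : ∑ i ∈ treatSet stratum Z k, (Y i - ybar1 stratum Z Y k) ^ 2
        = (n1 stratum Z k : ℝ) * s1sq stratum Z Y k := by
      have h : (n1 stratum Z k : ℝ) ≠ 0 := by exact_mod_cast (h1 k).ne'
      rw [s1sq, mul_div_cancel₀ _ h]
    have hs0 : ∑ i ∈ ctrlSet stratum Z k, (Y i - ybar0 stratum Z Y k) ^ 2
        = (n0 stratum Z k : ℝ) * s0sq stratum Z Y k := by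
      have h : (n0 stratum Z k : ℝ) ≠ 0 := by exact_mod_cast (h0 k).ne'
      rw [s0sq, mul_div_cancel₀ _ h]
    rw [hs1, hs0]
    rw [show ((treatSet stratum Z k).card : ℝ) = (n1 stratum Z k : ℝ) from rfl,
      show ((ctrlSet stratum Z k).card : ℝ) = (n0 stratum Z k : ℝ) from rfl]
    ring
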